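/- Let X be a real-valued random variable with law P, an atomless (continuous) distribution on ℝ with CDF F. The simplicial depth random variable SD(X;P) = 2F(X)(1−F(X)) first-order stochastically dominates the halfspace depth random variable HD(X;P) = min{F(X), 1−F(X)}: for every z ∈ [0, 1/2], the CDF of SD(X;P) at z, namely 1 − √(1 − 2z), is at most the CDF of HD(X;P) at z, namely 2z; moreover equality 1 − √(1 − 2z) = 2z holds only at z = 0 and z = 1/2. -/

import Mathlib

open MeasureTheory Set
open Filter Function Topology

/-- The cdf is left-continuous for atomless measures: leftLim equals value. -/
lemma cdf_leftLim_eq (P : Measure ℝ) [IsProbabilityMeasure P] [NullSingletonClass P] (c : ℝ) :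
    leftLim (ProbabilityTheory.cdf P) c = ProbabilityTheory.cdf P c := by
  set f := ProbabilityTheory.cdf P
  have h1 : f.measure {c} = ENNReal.ofReal (f c - leftLim f c) := f.measure_singleton c
  rw [ProbabilityTheory.measure_cdf, measure_singleton] at h1
  have h2 : f c - leftLim f c ≤ 0 := by
    by_contra h
    push_neg at h
    have := ENNReal.ofReal_pos.mpr h
    rw [← h1] at this
    exact lt_irrefl _ this
  have h3 : leftLim f c ≤ f c := f.mono.leftLim_le le_rfl
  linarith

/-- Probability integral transform, ≤ version. -/
lemma cdf_le_measure (P : Measure ℝ) [IsProbabilityMeasure P] [NullSingletonClass P]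
    (t : ℝ) (ht0 : 0 ≤ t) (ht1 : t ≤ 1) :
    (P {x | ProbabilityTheory.cdf P x ≤ t}).toReal = t := by
  set f := ProbabilityTheory.cdf P with hf
  set S := {x | f x ≤ t} with hS
  rcases eq_empty_or_nonempty S with hemp | hne
  · have ht : t = 0 := by
      by_contra h
      have htpos : 0 < t := lt_of_le_of_ne ht0 (Ne.symm h)
      have := (ProbabilityTheory.tendsto_cdf_atBot P).eventually_lt_const htpos
      obtain ⟨x, hx⟩ := this.exists
      have : x ∈ S := hx.le
      rw [hemp] at this
      exact this
    simp [hemp, ht]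
  rcases em (BddAbove S) with hbdd | hunbdd
  · set c := sSup S with hc
    have hdown : ∀ x, x < c → f x ≤ t := by
      intro x hx
      obtain ⟨y, hyS, hxy⟩ := exists_lt_of_lt_csSup hne hx
      exact le_trans (f.mono hxy.le) hyS
    have hcS : f c ≤ t := by
      have hten : Tendsto f (𝓝[<] c) (𝓝 (f c)) := by
        have := f.mono.tendsto_leftLim c
        rwa [cdf_leftLim_eq P c] at this
      refine le_of_tendsto hten ?_
      filter_upwards [self_mem_nhdsWithin] with y hy using hdown y hy
    have hSeq : S = Iic c := by
      ext x
      constructor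
      · intro hx; exact le_csSup hbdd hx
      · intro hx
        have hx' : x ≤ c := hx
        rcases lt_or_eq_of_le hx' with h | h
        · exact hdown x h
        · simpa [hS, h] using hcS
    have hct : f c = t := by
      refine le_antisymm hcS ?_
      have hten : Tendsto f (𝓝[>] c) (𝓝 (f c)) :=
        (f.right_continuous c).mono (Ioi_subset_Ici le_rfl)
      refine ge_of_tendsto hten ?_
      filter_upwards [self_mem_nhdsWithin] with y hy
      by_contra h
      push_neg at h
      exact absurd (hSeq ▸ (h.le : f y ≤ t) : y ∈ Iic c) (not_le.mpr hy : ¬ y ≤ c)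
    rw [hSeq, ← hct, ProbabilityTheory.cdf_eq_real, measureReal_def]
  · have hall : ∀ x, f x ≤ t := by
      intro x
      rw [not_bddAbove_iff] at hunbdd
      obtain ⟨y, hyS, hxy⟩ := hunbdd x
      exact le_trans (f.mono hxy.le) hyS
    have hSu : S = univ := eq_univ_of_forall hall
    have ht : 1 ≤ t := le_of_tendsto (ProbabilityTheory.tendsto_cdf_atTop P) (Eventually.of_forall hall)
    have : t = 1 := le_antisymm ht1 ht
    simp [hSu, this]

/-- Probability integral transform, ≥ version. -/
lemma measure_cdf_ge (P : Measure ℝ) [IsProbabilityMeasure P] [NullSingletonClass P]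
    (t : ℝ) (ht0 : 0 ≤ t) (ht1 : t ≤ 1) :
    (P {x | t ≤ ProbabilityTheory.cdf P x}).toReal = 1 - t := by
  set f := ProbabilityTheory.cdf P with hf
  have hfm : Measurable (f : ℝ → ℝ) := f.mono.measurable
  have hlt : (P {x | f x < t}).toReal = t := by
    have hle : (P {x | f x < t}).toReal ≤ t := by
      have h : (P {x | f x < t}).toReal ≤ (P {x | f x ≤ t}).toReal :=
        ENNReal.toReal_mono (measure_ne_top P _)
          (measure_mono (fun x (hx : f x < t) => (le_of_lt hx : f x ≤ t)))
      rwa [cdf_le_measure P t ht0 ht1] at h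
    have hge : ∀ s, 0 ≤ s → s < t → s ≤ (P {x | f x < t}).toReal := by
      intro s hs0 hst
      have h : (P {x | f x ≤ s}).toReal ≤ (P {x | f x < t}).toReal :=
        ENNReal.toReal_mono (measure_ne_top P _)
          (measure_mono (fun x (hx : f x ≤ s) => (lt_of_le_of_lt hx hst : f x < t)))
      rwa [cdf_le_measure P s hs0 (hst.le.trans ht1)] at h
    refine le_antisymm hle ?_
    by_contra h
    push_neg at h
    set X := (P {x | f x < t}).toReal with hX
    have hX0 : 0 ≤ X := ENNReal.toReal_nonneg
    have := hge ((X + t) / 2) (by linarith) (by linarith)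
    linarith
  have hcompl : {x | t ≤ f x} = {x | f x < t}ᶜ := by
    ext x; simp [not_lt]
  have hadd : P {x | f x < t} + P {x | f x < t}ᶜ = 1 := by
    have hms : MeasurableSet {x | f x < t} := hfm measurableSet_Iio
    rw [measure_add_measure_compl hms]
    simp
  have := congrArg ENNReal.toReal hadd
  rw [ENNReal.toReal_add (measure_ne_top P _) (measure_ne_top P _)] at this
  simp only [ENNReal.toReal_one] at this
  rw [hcompl]
  linarith

lemma quad_iff (z t s : ℝ) (hs2 : s ^ 2 = 1 - 2 * z) (hsp : 0 < s) :
    2 * t * (1 - t) ≤ z ↔ t ≤ (1 - s) / 2 ∨ (1 + s) / 2 ≤ t := by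
  constructor
  · intro h
    by_contra hc
    push_neg at hc
    obtain ⟨h1, h2⟩ := hc
    nlinarith [mul_pos (sub_pos.mpr h1) (sub_pos.mpr h2)]
  · rintro (h | h)
    · nlinarith [mul_nonneg (sub_nonneg.mpr h) (sub_nonneg.mpr (le_trans h (by linarith : (1-s)/2 ≤ (1+s)/2)))]
    · nlinarith [mul_nonneg (sub_nonneg.mpr h) (sub_nonneg.mpr (le_trans (by linarith : (1-s)/2 ≤ (1+s)/2) h))]

/-- For `X ~ P` atomless on `ℝ` with CDF `F`, the simplicial depth random variable
`2 F(X)(1 - F(X))` first-order stochastically dominates the halfspace depth random variable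
`min (F X) (1 - F X)`: for every `z ∈ [0, 1/2]`, the CDF of the former at `z`, namely
`1 - √(1 - 2z)`, is at most the CDF of the latter at `z`, namely `2 z`; moreover equality
`1 - √(1 - 2z) = 2z` holds exactly at `z = 0` and `z = 1/2`. -/
theorem simplicial_dominates_halfspace
    (P : Measure ℝ) [IsProbabilityMeasure P] [NullSingletonClass P]
    (F : ℝ → ℝ) (hF : ∀ x, F x = (P (Iic x)).toReal) :
    ∀ z ∈ Icc (0 : ℝ) (1 / 2),
      (P {x | 2 * F x * (1 - F x) ≤ z}).toReal = 1 - Real.sqrt (1 - 2 * z) ∧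
      (P {x | min (F x) (1 - F x) ≤ z}).toReal = 2 * z ∧
      1 - Real.sqrt (1 - 2 * z) ≤ 2 * z ∧
      (1 - Real.sqrt (1 - 2 * z) = 2 * z ↔ z = 0 ∨ z = 1 / 2) := by
  intro z hz
  obtain ⟨hz0, hz12⟩ := hz
  set f := ProbabilityTheory.cdf P with hfdef
  have hFf : ∀ x, F x = f x := fun x => by
    rw [hF x, ProbabilityTheory.cdf_eq_real, measureReal_def]
  have hfm : Measurable (f : ℝ → ℝ) := f.mono.measurable
  have hu0 : (0:ℝ) ≤ 1 - 2 * z := by linarith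
  have hu1 : 1 - 2 * z ≤ 1 := by linarith
  set s := Real.sqrt (1 - 2 * z) with hsdef
  have hs0 : 0 ≤ s := Real.sqrt_nonneg _
  have hs2 : s ^ 2 = 1 - 2 * z := Real.sq_sqrt hu0
  have hs1 : s ≤ 1 := by nlinarith
  refine ⟨?_, ?_, ?_, ?_⟩
  · -- simplicial depth cdf
    rcases eq_or_lt_of_le hz12 with heq | hlt
    · -- z = 1/2
      have hsz : s = 0 := by
        rw [hsdef, heq]; norm_num
      have huniv : {x | 2 * F x * (1 - F x) ≤ z} = univ := by
        apply eq_univ_of_forall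
        intro x
        show 2 * F x * (1 - F x) ≤ z
        rw [heq]
        nlinarith [sq_nonneg (F x - 1/2)]
      rw [huniv, hsz]
      simp
    · -- z < 1/2
      have hsp : 0 < s := Real.sqrt_pos.mpr (by linarith)
      have hSeq : {x | 2 * F x * (1 - F x) ≤ z}
          = {x | f x ≤ (1 - s) / 2} ∪ {x | (1 + s) / 2 ≤ f x} := by
        ext x
        simp only [mem_setOf_eq, mem_union, hFf x]
        exact quad_iff z (f x) s hs2 hsp
      have hdisj : Disjoint {x | f x ≤ (1 - s) / 2} {x | (1 + s) / 2 ≤ f x} := by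
        rw [Set.disjoint_left]
        intro x h1 h2
        have : (1 - s) / 2 < (1 + s) / 2 := by linarith
        exact absurd (le_trans h2 h1) (not_le.mpr this)
      rw [hSeq, measure_union hdisj (hfm measurableSet_Ici)]
      rw [ENNReal.toReal_add (measure_ne_top P _) (measure_ne_top P _)]
      rw [cdf_le_measure P _ (by linarith) (by linarith),
        measure_cdf_ge P _ (by linarith) (by linarith)]
      ring
  · -- halfspace depth cdf
    rcases eq_or_lt_of_le hz12 with heq | hlt
    · have huniv : {x | min (F x) (1 - F x) ≤ z} = univ := by
        apply eq_univ_of_forall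
        intro x
        show min (F x) (1 - F x) ≤ z
        rw [heq]
        rcases le_total (F x) (1/2) with h | h
        · exact min_le_of_left_le h
        · exact min_le_of_right_le (by linarith)
      rw [huniv, heq]
      simp
    · have hSeq : {x | min (F x) (1 - F x) ≤ z}
          = {x | f x ≤ z} ∪ {x | 1 - z ≤ f x} := by
        ext x
        simp only [mem_setOf_eq, mem_union, hFf x, min_le_iff]
        constructor
        · rintro (h | h)
          · exact Or.inl h
          · exact Or.inr (by linarith)
        · rintro (h | h)
          · exact Or.inl h
          · exact Or.inr (by linarith)
      have hdisj : Disjoint {x | f x ≤ z} {x | 1 - z ≤ f x} := by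
        rw [Set.disjoint_left]
        intro x h1 h2
        have : z < 1 - z := by linarith
        exact absurd (le_trans h2 h1) (not_le.mpr this)
      rw [hSeq, measure_union hdisj (hfm measurableSet_Ici)]
      rw [ENNReal.toReal_add (measure_ne_top P _) (measure_ne_top P _)]
      rw [cdf_le_measure P _ hz0 (by linarith),
        measure_cdf_ge P _ (by linarith) (by linarith)]
      ring
  · nlinarith
  · constructor
    · intro h
      have hsu : s = 1 - 2 * z := by linarith
      have : (1 - 2 * z) ^ 2 = 1 - 2 * z := by rw [← hsu, hs2]; exact hsu.symm
      have h2 : (1 - 2 * z) * (1 - 2 * z - 1) = 0 := by nlinarith [this]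
      rcases mul_eq_zero.mp h2 with h1 | h1
      · right; linarith
      · left; linarith
    · rintro (h | h) <;> subst h <;> rw [hsdef] <;> norm_num [Real.sqrt_one, Real.sqrt_zero]
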